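/- For a hermitian circulant operator O on ℂ²⊗ℂ^d with non-negative real off-diagonal entries u_k ≥ 0 and real diagonal w_{ik}, the supremum of ⟨x⊗y|O|x⊗y⟩ over complex unit product vectors equals the supremum over real unit product vectors with non-negative components: sup over x∈ℂ², y∈ℂ^d equals sup over x∈ℝ²_{≥0}, y∈ℝ^d_{≥0}. -/

import Mathlib

open Matrix

def circOp (d : ℕ) [NeZero d] (w : Fin 2 → Fin d → ℝ) (a : Fin d → ℂ) :
    Matrix (Fin 2 × Fin d) (Fin 2 × Fin d) ℂ :=
  Matrix.of fun p q =>
    (if p = q then (w p.1 p.2 : ℂ) else 0) +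
    (if p.1 = 0 ∧ q.1 = 1 ∧ q.2 = p.2 + 1 then a p.2 else 0) +
    (if p.1 = 1 ∧ q.1 = 0 ∧ p.2 = q.2 + 1 then starRingEnd ℂ (a q.2) else 0)

def tensorVec {m n : Type*} (x : m → ℂ) (y : n → ℂ) : m × n → ℂ := fun p => x p.1 * y p.2

lemma sum_shift {d : ℕ} [NeZero d] (f : Fin d → Fin d → ℂ) :
    (∑ a : Fin d, ∑ b : Fin d, if a = b + 1 then f a b else 0) = ∑ b : Fin d, f (b + 1) b := by
  rw [Finset.sum_comm]; simp

lemma quad_eq (d : ℕ) [NeZero d] (w : Fin 2 → Fin d → ℝ) (u : Fin d → ℝ)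
    (x : Fin 2 → ℂ) (y : Fin d → ℂ) :
    star (tensorVec x y) ⬝ᵥ (circOp d w (fun k => (u k : ℂ))).mulVec (tensorVec x y)
    = (∑ k, ((w 0 k : ℂ) * (starRingEnd ℂ (x 0) * x 0)
           + (w 1 k : ℂ) * (starRingEnd ℂ (x 1) * x 1)) * (starRingEnd ℂ (y k) * y k)
        + ∑ k, (u k : ℂ) * (starRingEnd ℂ (x 0) * x 1 * starRingEnd ℂ (y k) * y (k + 1)))
      + ∑ k, (u k : ℂ) * (x 0 * starRingEnd ℂ (x 1) * y k * starRingEnd ℂ (y (k + 1))) := by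
  have h01 : ((0 : Fin 2) = 1) = False := by simp
  have h10 : ((1 : Fin 2) = 0) = False := by simp
  simp only [dotProduct, mulVec, circOp, tensorVec, Matrix.of_apply, Pi.star_apply, star_mul',
    Fintype.sum_prod_type, Fin.sum_univ_two, mul_add, add_mul, Finset.sum_add_distrib,
    Finset.mul_sum, mul_ite, ite_mul, zero_mul, mul_zero, Finset.sum_ite_eq,
    Finset.sum_ite_eq', Prod.mk.injEq, Finset.mem_univ, if_true, h01, h10, true_and, and_true,
    false_and, and_false, if_false, Finset.sum_const_zero, add_zero, zero_add, sum_shift,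
    Complex.conj_ofReal, RCLike.star_def]
  simp only [← Finset.sum_add_distrib]
  apply Finset.sum_congr rfl
  intro k _
  ring


section helpers
variable {d : ℕ}

lemma unit_normSq {n : Type*} [Fintype n] (y : n → ℂ) (h : star y ⬝ᵥ y = 1) :
    ∑ k, Complex.normSq (y k) = 1 := by
  have h2 : ∀ k : n, (star (y k) * y k).re = Complex.normSq (y k) := fun k => by
    rw [RCLike.star_def, mul_comm, Complex.mul_conj, Complex.ofReal_re]
  have := congrArg Complex.re h
  simp only [dotProduct, Pi.star_apply, Complex.re_sum, Complex.one_re] at this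
  rw [← Finset.sum_congr rfl (fun k _ => h2 k)]
  exact this

lemma abs_le_one_of_normSq_le_one (z : ℂ) (h : Complex.normSq z ≤ 1) : ‖z‖ ≤ 1 := by
  nlinarith [Complex.sq_norm z, norm_nonneg z]

lemma coe_unit {n : Type*} [Fintype n] (x : n → ℝ) (hx : ∑ i, x i ^ 2 = 1) :
    star (fun i => (x i : ℂ)) ⬝ᵥ (fun i => (x i : ℂ)) = 1 := by
  simp only [dotProduct, Pi.star_apply, RCLike.star_def, Complex.conj_ofReal,
    ← Complex.ofReal_mul, ← Complex.ofReal_sum, ← sq]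
  exact_mod_cast hx

end helpers

lemma re_quad (d : ℕ) [NeZero d] (w : Fin 2 → Fin d → ℝ) (u : Fin d → ℝ)
    (x : Fin 2 → ℂ) (y : Fin d → ℂ) :
    (star (tensorVec x y) ⬝ᵥ (circOp d w (fun k => (u k : ℂ))).mulVec (tensorVec x y)).re
    = (∑ k, (w 0 k * Complex.normSq (x 0) + w 1 k * Complex.normSq (x 1)) * Complex.normSq (y k))
      + ∑ k, u k *
          (2 * (starRingEnd ℂ (x 0) * x 1 * starRingEnd ℂ (y k) * y (k + 1)).re) := by
  rw [quad_eq]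
  have key : ∀ k : Fin d,
      ((u k : ℂ) * (starRingEnd ℂ (x 0) * x 1 * starRingEnd ℂ (y k) * y (k + 1))).re
      + ((u k : ℂ) * (x 0 * starRingEnd ℂ (x 1) * y k * starRingEnd ℂ (y (k + 1)))).re
      = u k * (2 * (starRingEnd ℂ (x 0) * x 1 * starRingEnd ℂ (y k) * y (k + 1)).re) := by
    intro k
    have : x 0 * starRingEnd ℂ (x 1) * y k * starRingEnd ℂ (y (k + 1))
        = starRingEnd ℂ (starRingEnd ℂ (x 0) * x 1 * starRingEnd ℂ (y k) * y (k + 1)) := by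
      simp only [_root_.map_mul, Complex.conj_conj]
    rw [this, Complex.re_ofReal_mul, Complex.re_ofReal_mul, Complex.conj_re]
    ring
  have hw : ∀ k : Fin d,
      (((w 0 k : ℂ) * (starRingEnd ℂ (x 0) * x 0)
        + (w 1 k : ℂ) * (starRingEnd ℂ (x 1) * x 1)) * (starRingEnd ℂ (y k) * y k)).re
      = (w 0 k * Complex.normSq (x 0) + w 1 k * Complex.normSq (x 1)) * Complex.normSq (y k) := by
    intro k
    rw [mul_comm (starRingEnd ℂ (x 0)) (x 0), mul_comm (starRingEnd ℂ (x 1)) (x 1),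
      mul_comm (starRingEnd ℂ (y k)) (y k), Complex.mul_conj, Complex.mul_conj,
      Complex.mul_conj]
    norm_cast
  simp only [Complex.add_re, Complex.re_sum]
  rw [add_assoc, ← Finset.sum_add_distrib,
    Finset.sum_congr rfl (fun k _ => key k), Finset.sum_congr rfl (fun k _ => hw k)]

/-- For a circulant operator in real representation (`u_k ≥ 0`, `w` real), the supremum of
the expectation value over complex unit product vectors equals the supremum over real unit
product vectors with non-negative components. -/
theorem circOp_sup_real (d : ℕ) [NeZero d] (hd : 2 ≤ d)
    (w : Fin 2 → Fin d → ℝ) (u : Fin d → ℝ) (hu : ∀ k, 0 ≤ u k) :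
    sSup {r : ℝ | ∃ (x : Fin 2 → ℂ) (y : Fin d → ℂ),
        star x ⬝ᵥ x = 1 ∧ star y ⬝ᵥ y = 1 ∧
        (star (tensorVec x y) ⬝ᵥ
          (circOp d w (fun k => (u k : ℂ))).mulVec (tensorVec x y)).re = r} =
    sSup {r : ℝ | ∃ (x : Fin 2 → ℝ) (y : Fin d → ℝ),
        (∀ i, 0 ≤ x i) ∧ (∀ k, 0 ≤ y k) ∧
        (∑ i, x i ^ 2) = 1 ∧ (∑ k, y k ^ 2) = 1 ∧
        (star (tensorVec (fun i => (x i : ℂ)) (fun k => (y k : ℂ))) ⬝ᵥ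
          (circOp d w (fun k => (u k : ℂ))).mulVec
            (tensorVec (fun i => (x i : ℂ)) (fun k => (y k : ℂ)))).re = r} := by
  classical
  set A : Set ℝ := {r : ℝ | ∃ (x : Fin 2 → ℂ) (y : Fin d → ℂ),
        star x ⬝ᵥ x = 1 ∧ star y ⬝ᵥ y = 1 ∧
        (star (tensorVec x y) ⬝ᵥ
          (circOp d w (fun k => (u k : ℂ))).mulVec (tensorVec x y)).re = r} with hA
  set B : Set ℝ := {r : ℝ | ∃ (x : Fin 2 → ℝ) (y : Fin d → ℝ),
        (∀ i, 0 ≤ x i) ∧ (∀ k, 0 ≤ y k) ∧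
        (∑ i, x i ^ 2) = 1 ∧ (∑ k, y k ^ 2) = 1 ∧
        (star (tensorVec (fun i => (x i : ℂ)) (fun k => (y k : ℂ))) ⬝ᵥ
          (circOp d w (fun k => (u k : ℂ))).mulVec
            (tensorVec (fun i => (x i : ℂ)) (fun k => (y k : ℂ)))).re = r} with hB
  -- B ⊆ A
  have hBA : B ⊆ A := by
    rintro r ⟨x, y, hxp, hyp, hx1, hy1, hval⟩
    exact ⟨fun i => (x i : ℂ), fun k => (y k : ℂ), coe_unit x hx1, coe_unit y hy1, hval⟩
  -- B is nonempty
  have hBne : B.Nonempty := by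
    refine ⟨_, (fun i => if i = 0 then 1 else 0), (fun k => if k = 0 then 1 else 0),
      fun i => by positivity, fun k => by positivity, ?_, ?_, rfl⟩
    · simp [apply_ite (fun t : ℝ => t ^ 2)]
    · simp [apply_ite (fun t : ℝ => t ^ 2)]
  have hAne : A.Nonempty := hBne.mono hBA
  -- A is bounded above
  set M : ℝ := (∑ k, (|w 0 k| + |w 1 k|)) + ∑ k, 2 * u k with hM
  have hAbdd : ∀ r ∈ A, r ≤ M := by
    rintro r ⟨x, y, hx1, hy1, hval⟩
    have hxs := unit_normSq x hx1
    have hys := unit_normSq y hy1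
    have hx0 : Complex.normSq (x 0) ≤ 1 := by
      rw [← hxs, Fin.sum_univ_two]; nlinarith [Complex.normSq_nonneg (x 1)]
    have hx1' : Complex.normSq (x 1) ≤ 1 := by
      rw [← hxs, Fin.sum_univ_two]; nlinarith [Complex.normSq_nonneg (x 0)]
    have hyk : ∀ k, Complex.normSq (y k) ≤ 1 := fun k => by
      rw [← hys]
      exact Finset.single_le_sum (fun i _ => Complex.normSq_nonneg (y i)) (Finset.mem_univ k)
    rw [← hval, re_quad, hM]
    refine add_le_add (Finset.sum_le_sum ?_) (Finset.sum_le_sum ?_)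
    · intro k _
      have ha : 0 ≤ Complex.normSq (x 0) := Complex.normSq_nonneg _
      have hb : 0 ≤ Complex.normSq (x 1) := Complex.normSq_nonneg _
      have hc : 0 ≤ Complex.normSq (y k) := Complex.normSq_nonneg _
      have h1 : w 0 k * Complex.normSq (x 0) ≤ |w 0 k| := by
        nlinarith [mul_nonneg (sub_nonneg.2 (le_abs_self (w 0 k))) ha,
          mul_nonneg (abs_nonneg (w 0 k)) (sub_nonneg.2 hx0)]
      have h2 : w 1 k * Complex.normSq (x 1) ≤ |w 1 k| := by
        nlinarith [mul_nonneg (sub_nonneg.2 (le_abs_self (w 1 k))) hb,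
          mul_nonneg (abs_nonneg (w 1 k)) (sub_nonneg.2 hx1')]
      have hS : 0 ≤ |w 0 k| + |w 1 k| := add_nonneg (abs_nonneg _) (abs_nonneg _)
      nlinarith [mul_nonneg hc (sub_nonneg.2 (add_le_add h1 h2)),
        mul_nonneg hS (sub_nonneg.2 (hyk k))]
    · intro k _
      have habs : ‖starRingEnd ℂ (x 0) * x 1 * starRingEnd ℂ (y k) * y (k + 1)‖ ≤ 1 := by
        simp only [norm_mul, Complex.norm_conj]
        have a0 := abs_le_one_of_normSq_le_one _ hx0
        have a1 := abs_le_one_of_normSq_le_one _ hx1'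
        have b0 := abs_le_one_of_normSq_le_one _ (hyk k)
        have b1 := abs_le_one_of_normSq_le_one _ (hyk (k + 1))
        have n0 := norm_nonneg (x 0)
        have n1 := norm_nonneg (x 1)
        have m0 := norm_nonneg (y k)
        have m1 := norm_nonneg (y (k + 1))
        exact mul_le_one₀ (mul_le_one₀ (mul_le_one₀ a0 n1 a1) m0 b0) m1 b1
      have hre := (Complex.re_le_norm (starRingEnd ℂ (x 0) * x 1 * starRingEnd ℂ (y k) * y (k + 1))).trans habs
      nlinarith [hu k]
  have hAbdd' : BddAbove A := ⟨M, fun r hr => hAbdd r hr⟩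
  have hBbdd' : BddAbove B := ⟨M, fun r hr => hAbdd r (hBA hr)⟩
  -- every element of A is dominated by an element of B
  have hdom : ∀ r ∈ A, ∃ r' ∈ B, r ≤ r' := by
    rintro r ⟨x, y, hx1, hy1, hval⟩
    have hxs := unit_normSq x hx1
    have hys := unit_normSq y hy1
    refine ⟨_, ⟨fun i => ‖x i‖, fun k => ‖y k‖,
      fun i => norm_nonneg _, fun k => norm_nonneg _, ?_, ?_, rfl⟩, ?_⟩
    · simpa [Complex.sq_norm] using hxs
    · simpa [Complex.sq_norm] using hys
    · rw [← hval, re_quad, re_quad]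
      simp only [Complex.normSq_ofReal, (fun z : ℂ => (by rw [← sq, Complex.sq_norm] : ‖z‖ * ‖z‖ = Complex.normSq z)), Complex.sq_norm,
        Complex.conj_ofReal, ← Complex.ofReal_mul, Complex.ofReal_re]
      refine add_le_add_right (Finset.sum_le_sum ?_) _
      intro k _
      have hre : (starRingEnd ℂ (x 0) * x 1 * starRingEnd ℂ (y k) * y (k + 1)).re
          ≤ ‖x 0‖ * ‖x 1‖ * ‖y k‖ * ‖y (k + 1)‖ := by
        refine (Complex.re_le_norm _).trans ?_
        simp [norm_mul, Complex.norm_conj]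
      have := hu k
      nlinarith
  refine le_antisymm (csSup_le hAne fun r hr => ?_) (csSup_le hBne fun r hr => le_csSup hAbdd' (hBA hr))
  obtain ⟨r', hr'B, hrr'⟩ := hdom r hr
  exact hrr'.trans (le_csSup hBbdd' hr'B)
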